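/- Let G be a connected loopless multigraph with two vertices v and w of odd degree joined to each other by exactly two parallel edges. If G − v is connected and G − {v,w} is connected, then there exists an edge f of G such that G \ {f} admits an odd 3-edge-coloring. -/

import Mathlib

open Finset

attribute [local instance] Classical.propDecidable
set_option linter.unusedSectionVars false
set_option linter.unusedVariables false
set_option maxHeartbeats 1000000



section Basics

variable {V E : Type*} [Fintype V] [Fintype E] (ends : E → Sym2 V)

noncomputable def degF (X : Finset E) (u : V) : ℕ := (X.filter (fun e => u ∈ ends e)).card

lemma sym2_eq {z : Sym2 V} {a b : V} (ha : a ∈ z) (hb : b ∈ z) (hab : a ≠ b) :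
    z = s(a, b) := by
  induction z using Sym2.ind with
  | _ x y =>
    rw [Sym2.mem_iff] at ha hb
    rcases ha with rfl | rfl <;> rcases hb with rfl | rfl
    · exact absurd rfl hab
    · rfl
    · rw [Sym2.eq_swap]
    · exact absurd rfl hab

lemma degF_union {X Y : Finset E} (h : Disjoint X Y) (u : V) :
    degF ends (X ∪ Y) u = degF ends X u + degF ends Y u := by
  unfold degF
  rw [filter_union, card_union_of_disjoint (disjoint_filter_filter h)]

lemma degF_zero {X : Finset E} {u : V} (h : ∀ e ∈ X, u ∉ ends e) :
    degF ends X u = 0 := by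
  unfold degF
  rw [Finset.card_eq_zero, Finset.filter_eq_empty_iff]
  exact fun e he => h e he

lemma odd_of_zmod {n : ℕ} (h : (n : ZMod 2) = 1) : Odd n := by
  rcases Nat.even_or_odd n with he | ho
  · exfalso
    obtain ⟨k, rfl⟩ := he
    rw [show k + k = 2 * k by ring] at h
    push_cast at h
    rw [show (2 : ZMod 2) = 0 by decide, zero_mul] at h
    simp at h
  · exact ho

lemma zmod_of_even {n : ℕ} (h : Even n) : (n : ZMod 2) = 0 := by
  obtain ⟨k, rfl⟩ := h
  rw [show k + k = 2 * k by ring]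
  push_cast
  rw [show (2 : ZMod 2) = 0 by decide, zero_mul]

lemma zmod_of_odd {n : ℕ} (h : Odd n) : (n : ZMod 2) = 1 := by
  obtain ⟨k, rfl⟩ := h
  push_cast
  rw [show (2 : ZMod 2) = 0 by decide, zero_mul, zero_add]

lemma zmod_cases (n : ℕ) : (n : ZMod 2) = 0 ∨ (n : ZMod 2) = 1 := by
  rcases Nat.even_or_odd n with h | h
  · exact Or.inl (zmod_of_even h)
  · exact Or.inr (zmod_of_odd h)

lemma even_of_zmod {n : ℕ} (h : (n : ZMod 2) = 0) : Even n := by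
  rcases Nat.even_or_odd n with he | ho
  · exact he
  · rw [zmod_of_odd ho] at h; simp at h

lemma card_mem_sym2 {z : Sym2 V} (hl : ¬ z.IsDiag) :
    (Finset.univ.filter (fun u => u ∈ z)).card = 2 := by
  induction z using Sym2.ind with
  | _ x y =>
    have hxy : x ≠ y := by simpa [Sym2.mk_isDiag_iff] using hl
    have : (Finset.univ.filter (fun u => u ∈ s(x, y))) = {x, y} := by
      ext u; simp [Sym2.mem_iff]
    rw [this, Finset.card_pair hxy]

/-- handshake lemma mod 2 -/
lemma handshake (hl : ∀ e, ¬ (ends e).IsDiag) (X : Finset E) :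
    (∑ u : V, (degF ends X u : ZMod 2)) = 0 := by
  have : ∀ u : V, degF ends X u = ∑ e ∈ X, (if u ∈ ends e then 1 else 0) := by
    intro u; unfold degF; rw [Finset.card_filter]
  calc (∑ u : V, (degF ends X u : ZMod 2))
      = ∑ u : V, ∑ e ∈ X, (if u ∈ ends e then (1 : ZMod 2) else 0) := by
        refine Finset.sum_congr rfl fun u _ => ?_
        rw [this u]; push_cast; exact Finset.sum_congr rfl fun e _ => by split <;> simp
    _ = ∑ e ∈ X, ∑ u : V, (if u ∈ ends e then (1 : ZMod 2) else 0) := Finset.sum_comm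
    _ = ∑ e ∈ X, ((Finset.univ.filter (fun u => u ∈ ends e)).card : ZMod 2) := by
        refine Finset.sum_congr rfl fun e _ => ?_
        rw [Finset.card_filter]; push_cast
        exact (Finset.sum_congr rfl fun u _ => by split <;> simp).symm
    _ = ∑ e ∈ X, ((2 : ℕ) : ZMod 2) := by
        refine Finset.sum_congr rfl fun e _ => ?_
        rw [card_mem_sym2 (hl e)]
    _ = 0 := by rw [Finset.sum_const, show ((2:ℕ) : ZMod 2) = 0 by decide, smul_zero]

end Basics



def stepsTo {V : Type*} (R : V → V → Prop) (r : V) : ℕ → V → Prop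
  | 0, u => u = r
  | n+1, u => ∃ b, stepsTo R r n b ∧ R b u

lemma reach_of_rtg {V : Type*} {R : V → V → Prop} {r u : V}
    (h : Relation.ReflTransGen R r u) : ∃ n, stepsTo R r n u := by
  induction h with
  | refl => exact ⟨0, rfl⟩
  | tail _ hbc ih => obtain ⟨n, hn⟩ := ih; exact ⟨n + 1, _, hn, hbc⟩

lemma struct {V E : Type*} [Nonempty E] (ends : E → Sym2 V)
    (U : Set V) (P0 : E → Prop) (R : V → V → Prop)
    (hR : ∀ a b, R a b → b ∈ U ∧ ∃ e, P0 e ∧ ends e = s(a, b))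
    (r : V) (hrU : r ∈ U)
    (hconn : ∀ u ∈ U, Relation.ReflTransGen R r u) :
    ∃ (rk : V → ℕ) (pm : V → V) (pe : V → E), ∀ x, x ∈ U → x ≠ r →
      pm x ∈ U ∧ rk (pm x) < rk x ∧ P0 (pe x) ∧ ends (pe x) = s(x, pm x) := by
  classical
  set d : V → ℕ := fun u => if h : ∃ n, stepsTo R r n u then Nat.find h else 0 with hd
  have hstepU : ∀ n b, stepsTo R r n b → b ∈ U := by
    intro n
    cases n with
    | zero => intro b hb; rw [show stepsTo R r 0 b = (b = r) from rfl] at hb; subst hb; exact hrU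
    | succ m => rintro b ⟨c, _, hcb⟩; exact (hR c b hcb).1
  have aux : ∀ x, ∃ b e, x ∈ U → x ≠ r →
      b ∈ U ∧ d b < d x ∧ P0 e ∧ ends e = s(x, b) := by
    intro x
    by_cases hx : x ∈ U ∧ x ≠ r
    · obtain ⟨hxU, hxr⟩ := hx
      have hex : ∃ n, stepsTo R r n x := reach_of_rtg (hconn x hxU)
      have hdx : d x = Nat.find hex := by rw [hd]; simp [hex]
      have hspec := Nat.find_spec hex
      cases hn : Nat.find hex with
      | zero =>
        rw [hn] at hspec
        exact absurd hspec hxr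
      | succ m =>
        rw [hn] at hspec
        obtain ⟨b, hbm, hbx⟩ := hspec
        obtain ⟨hxU', e, hPe, hends⟩ := hR b x hbx
        refine ⟨b, e, fun _ _ => ⟨hstepU m b hbm, ?_, hPe, by rw [hends, Sym2.eq_swap]⟩⟩
        have hexb : ∃ n, stepsTo R r n b := ⟨m, hbm⟩
        have : d b ≤ m := by rw [hd]; simp only [hexb, dif_pos]; exact Nat.find_le hbm
        omega
    · exact ⟨x, Classical.arbitrary E, fun h1 h2 => absurd ⟨h1, h2⟩ hx⟩
  choose pm pe hpm using aux
  exact ⟨d, pm, pe, fun x hx hxr => hpm x hx hxr⟩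



section Chains

variable {V : Type*}

noncomputable def chainD (U : Set V) (r : V) (rk : V → ℕ) (pm : V → V)
    (hst : ∀ x, x ∈ U → x ≠ r → rk (pm x) < rk x) (t : V) : Finset V :=
  if h : t ∈ U ∧ t ≠ r then insert t (chainD U r rk pm hst (pm t)) else ∅
termination_by rk t
decreasing_by exact hst t h.1 h.2

variable {U : Set V} {r : V} {rk : V → ℕ} {pm : V → V}

lemma chainD_mem (hst : ∀ x, x ∈ U → x ≠ r → rk (pm x) < rk x) :
    ∀ t, ∀ y ∈ chainD U r rk pm hst t, y ∈ U ∧ y ≠ r ∧ rk y ≤ rk t := by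
  have H : ∀ n t, rk t ≤ n → ∀ y ∈ chainD U r rk pm hst t, y ∈ U ∧ y ≠ r ∧ rk y ≤ rk t := by
    intro n
    induction n with
    | zero =>
      intro t ht y hy
      rw [chainD] at hy
      split at hy
      · next h => exact absurd (lt_of_lt_of_le (hst t h.1 h.2) ht) (by omega)
      · simp at hy
    | succ n ih =>
      intro t ht y hy
      rw [chainD] at hy
      split at hy
      · next h =>
        rcases Finset.mem_insert.mp hy with rfl | hy'
        · exact ⟨h.1, h.2, le_refl _⟩
        · have hlt := hst t h.1 h.2
          obtain ⟨h1, h2, h3⟩ := ih (pm t) (by omega) y hy'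
          exact ⟨h1, h2, by omega⟩
      · simp at hy
  exact fun t => H (rk t) t (le_refl _)

noncomputable def bnd (pm : V → V) (D : Finset V) (x : V) : ZMod 2 :=
  (if x ∈ D then 1 else 0) + ((D.filter (fun u => pm u = x)).card : ZMod 2)

lemma ind_symmDiff (A B : Finset V) (x : V) :
    (if x ∈ symmDiff A B then (1 : ZMod 2) else 0)
      = (if x ∈ A then 1 else 0) + (if x ∈ B then 1 else 0) := by
  by_cases h1 : x ∈ A <;> by_cases h2 : x ∈ B <;>
    simp [Finset.mem_symmDiff, h1, h2] <;> decide

lemma card_symmDiff_zmod (A B : Finset V) :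
    ((symmDiff A B).card : ZMod 2) = (A.card : ZMod 2) + B.card := by
  have h1 : symmDiff A B = (A \ B) ∪ (B \ A) := rfl
  have hdisj : Disjoint (A \ B) (B \ A) :=
    disjoint_of_subset_left (sdiff_subset) (disjoint_sdiff)
  have hA := Finset.card_sdiff_add_card_inter A B
  have hB := Finset.card_sdiff_add_card_inter B A
  have h2 : (symmDiff A B).card = (A \ B).card + (B \ A).card := by
    rw [h1, card_union_of_disjoint hdisj]
  have hAB : (A ∩ B).card = (B ∩ A).card := by rw [Finset.inter_comm]
  have key : (A.card : ZMod 2) + B.card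
      = ((A \ B).card : ZMod 2) + (B \ A).card + 2 * (A ∩ B).card := by
    rw [← hA, ← hB, hAB]; push_cast; ring
  rw [h2, key, show (2 : ZMod 2) = 0 by decide, zero_mul, add_zero]; push_cast; ring

lemma filter_symmDiff' (A B : Finset V) (p : V → Prop) :
    (symmDiff A B).filter p = symmDiff (A.filter p) (B.filter p) := by
  ext y
  simp only [Finset.mem_filter, Finset.mem_symmDiff]
  tauto

lemma bnd_symmDiff (A B : Finset V) (x : V) :
    bnd pm (symmDiff A B) x = bnd pm A x + bnd pm B x := by
  unfold bnd
  rw [ind_symmDiff, filter_symmDiff', card_symmDiff_zmod]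
  ring

lemma bnd_insert {t : V} {C : Finset V} (htc : t ∉ C) (x : V) :
    bnd pm (insert t C) x
      = (if x = t then 1 else 0) + (if x = pm t then 1 else 0) + bnd pm C x := by
  unfold bnd
  have h1 : (if x ∈ insert t C then (1 : ZMod 2) else 0)
      = (if x = t then 1 else 0) + (if x ∈ C then 1 else 0) := by
    by_cases hxt : x = t
    · subst hxt; simp [htc]
    · simp [Finset.mem_insert, hxt]
  have h2 : ((insert t C).filter (fun u => pm u = x)).card
      = (if pm t = x then 1 else 0) + (C.filter (fun u => pm u = x)).card := by
    rw [Finset.filter_insert]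
    by_cases h : pm t = x
    · rw [if_pos h, if_pos h,
        Finset.card_insert_of_notMem (fun hc' => htc (Finset.mem_of_mem_filter t hc'))]
      omega
    · rw [if_neg h, if_neg h]
      omega
  rw [h1, h2]
  push_cast
  have hsw : ((if pm t = x then (1 : ZMod 2) else 0)) = (if x = pm t then (1 : ZMod 2) else 0) := by
    by_cases h : pm t = x
    · rw [if_pos h, if_pos h.symm]
    · rw [if_neg h, if_neg (fun hh => h hh.symm)]
  rw [hsw]
  ring

lemma chainD_bnd (hst : ∀ x, x ∈ U → x ≠ r → rk (pm x) < rk x)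
    (hstU : ∀ x, x ∈ U → x ≠ r → pm x ∈ U) :
    ∀ t, t ∈ U → ∀ x,
    bnd pm (chainD U r rk pm hst t) x
      = (if x = t then 1 else 0) + (if x = r then 1 else 0) := by
  have base : ∀ x, bnd pm (∅ : Finset V) x = 0 := by
    intro x; unfold bnd; simp
  have H : ∀ n t, rk t ≤ n → t ∈ U → ∀ x,
      bnd pm (chainD U r rk pm hst t) x
        = (if x = t then 1 else 0) + (if x = r then 1 else 0) := by
    intro n
    induction n with
    | zero =>
      intro t ht htU x
      by_cases hc : t ≠ r
      · exact absurd (lt_of_lt_of_le (hst t htU hc) ht) (by omega)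
      · push_neg at hc; subst hc
        rw [chainD]
        simp only [ne_eq, not_true_eq_false, and_false, dite_false, base]
        by_cases hx : x = t
        · simp only [hx, if_pos rfl]; decide
        · simp [hx]
    | succ n ih =>
      intro t ht htU x
      by_cases hc : t ≠ r
      case neg =>
        push_neg at hc; subst hc
        rw [chainD]
        simp only [ne_eq, not_true_eq_false, and_false, dite_false, base]
        by_cases hx : x = t
        · simp only [hx, if_pos rfl]; decide
        · simp [hx]
      case pos =>
        rw [chainD]
        simp only [htU, hc, and_self, dite_true, ne_eq, not_false_eq_true]
        have hpmU : pm t ∈ U := hstU t htU hc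
        have hlt : rk (pm t) < rk t := hst t htU hc
        have htnotin : t ∉ chainD U r rk pm hst (pm t) := by
          intro hmem
          have := (chainD_mem hst (pm t) t hmem).2.2
          omega
        rw [bnd_insert htnotin, ih (pm t) (by omega) hpmU x]
        generalize (if x = t then (1 : ZMod 2) else 0) = a
        generalize hb : (if x = pm t then (1 : ZMod 2) else 0) = b
        generalize (if x = r then (1 : ZMod 2) else 0) = c
        have hbb : b + b = 0 := by
          rw [← hb]; by_cases h : x = pm t <;> simp [h]; decide
        linear_combination hbb
  exact fun t htU x => H (rk t) t (le_refl _) htU x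

lemma joinD (hst : ∀ x, x ∈ U → x ≠ r → rk (pm x) < rk x)
    (hstU : ∀ x, x ∈ U → x ≠ r → pm x ∈ U) :
    ∀ T : Finset V, (∀ t ∈ T, t ∈ U) → ∃ D : Finset V,
    (∀ y ∈ D, y ∈ U ∧ y ≠ r) ∧
    ∀ x, bnd pm D x
      = (if x ∈ T then 1 else 0) + (T.card : ZMod 2) * (if x = r then 1 else 0) := by
  intro T
  induction T using Finset.induction with
  | empty =>
    intro _
    refine ⟨∅, by simp, fun x => ?_⟩
    unfold bnd; simp
  | @insert t T htT ih =>
    intro hTU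
    obtain ⟨D', hD'mem, hD'⟩ := ih (fun u hu => hTU u (Finset.mem_insert_of_mem hu))
    have htU : t ∈ U := hTU t (Finset.mem_insert_self t T)
    refine ⟨symmDiff D' (chainD U r rk pm hst t), ?_, ?_⟩
    · intro y hy
      rcases Finset.mem_symmDiff.mp hy with ⟨h1, _⟩ | ⟨h1, _⟩
      · exact hD'mem y h1
      · have := chainD_mem hst t y h1
        exact ⟨this.1, this.2.1⟩
    · intro x
      rw [bnd_symmDiff, hD' x, chainD_bnd hst hstU t htU x,
        Finset.card_insert_of_notMem htT]
      have h1 : (if x ∈ insert t T then (1 : ZMod 2) else 0)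
          = (if x = t then 1 else 0) + (if x ∈ T then 1 else 0) := by
        by_cases hxt : x = t
        · subst hxt; simp [htT]
        · simp [Finset.mem_insert, hxt]
      rw [h1]
      push_cast
      ring
  
end Chains
section FP

variable {V E : Type*} [Fintype V] [Fintype E]

noncomputable def colC (rk : V → ℕ) (pm : V → V) (pe : V → E) (D : Finset V)
    (hwf : ∀ x ∈ D, rk (pm x) < rk x)
    (distf : V → Option E) (nH : V → ℕ) (x : V) : Bool :=
  if hx : x ∈ D then
    (let cp := Bool.xor (colC rk pm pe D hwf distf nH (pm x))
        (decide (distf (pm x) = some (pe x)) (h := Classical.propDecidable _));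
     if nH x % 2 = 1 then cp else !cp)
  else true
termination_by rk x
decreasing_by exact hwf x hx

end FP
lemma bool_eq_not {a b : Bool} (h : ¬ a = b) : b = !a := by
  cases a <;> cases b <;> simp_all

lemma decide_irrel {p : Prop} {h1 h2 : Decidable p} : @decide p h1 = @decide p h2 := by
  cases h1 <;> cases h2 <;> simp_all

lemma FPmain {V E : Type*} [Fintype V] [Fintype E]
    (ends : E → Sym2 V) (hloop : ∀ e, ¬ (ends e).IsDiag)
    (U : Set V) (r : V) (rk : V → ℕ) (pm : V → V) (pe : V → E)
    (hst : ∀ x, x ∈ U → x ≠ r → pm x ∈ U ∧ rk (pm x) < rk x ∧ ends (pe x) = s(x, pm x))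
    (P : Finset E) (foot : E → V)
    (hfootP : ∀ p ∈ P, foot p ∈ ends p ∧ foot p ∈ U)
    (hother : ∀ p ∈ P, ∀ x, x ∈ U → x ∈ ends p → x = foot p)
    (T : Finset V) (hTU : ∀ t ∈ T, t ∈ U) (hTcard : (T.card : ZMod 2) = 0) :
    ∃ B C : Finset E,
      Disjoint B C ∧
      P ⊆ B ∪ C ∧
      (∀ e ∈ B ∪ C, e ∈ P ∨ ∃ u, u ∈ U ∧ u ≠ r ∧ e = pe u) ∧
      (∀ x, x ∈ U → (degF ends B x = 0 ∨ Odd (degF ends B x)) ∧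
        (degF ends C x = 0 ∨ Odd (degF ends C x))) ∧
      (∀ x, x ∈ U → ((degF ends B x + degF ends C x : ℕ) : ZMod 2)
          = (if x ∈ T then 1 else 0) + ((degF ends P x : ℕ) : ZMod 2)) ∧
      (∀ x, x ∉ U → degF ends B x + degF ends C x = degF ends P x) := by
  classical
  have hst1 : ∀ x, x ∈ U → x ≠ r → rk (pm x) < rk x := fun x h1 h2 => (hst x h1 h2).2.1
  have hst2 : ∀ x, x ∈ U → x ≠ r → pm x ∈ U := fun x h1 h2 => (hst x h1 h2).1
  obtain ⟨D, hDmem, hbnd⟩ := joinD hst1 hst2 T hTU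
  -- basic facts about D
  have hDU : ∀ x ∈ D, x ∈ U := fun x hx => (hDmem x hx).1
  have hwf : ∀ x ∈ D, rk (pm x) < rk x :=
    fun x hx => hst1 x (hDmem x hx).1 (hDmem x hx).2
  have hends : ∀ x ∈ D, ends (pe x) = s(x, pm x) :=
    fun x hx => (hst x (hDmem x hx).1 (hDmem x hx).2).2.2
  have hpmU : ∀ x ∈ D, pm x ∈ U :=
    fun x hx => hst2 x (hDmem x hx).1 (hDmem x hx).2
  have hne : ∀ x ∈ D, x ≠ pm x := by
    intro x hx heq
    have := hloop (pe x)
    rw [hends x hx] at this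
    exact this (by rw [Sym2.mk_isDiag_iff]; exact heq)
  have hinj : ∀ x ∈ D, ∀ y ∈ D, pe x = pe y → x = y := by
    intro x hx y hy hpe
    have h1 : s(x, pm x) = s(y, pm y) := by rw [← hends x hx, ← hends y hy, hpe]
    rw [Sym2.eq_iff] at h1
    rcases h1 with ⟨h, _⟩ | ⟨h2, h3⟩
    · exact h
    · exfalso
      have hx1 := hwf x hx
      have hy1 := hwf y hy
      rw [h3] at hx1
      rw [← h2] at hy1
      omega
  have hmempe : ∀ x ∈ D, x ∈ ends (pe x) := by
    intro x hx; rw [hends x hx]; exact Sym2.mem_mk_left x (pm x)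
  have hmempe2 : ∀ x ∈ D, pm x ∈ ends (pe x) := by
    intro x hx; rw [hends x hx]; exact Sym2.mem_mk_right x (pm x)
  have hpeP : ∀ x ∈ D, pe x ∉ P := by
    intro x hx hmem
    have h1 := hother (pe x) hmem x (hDU x hx) (hmempe x hx)
    have h2 := hother (pe x) hmem (pm x) (hpmU x hx) (hmempe2 x hx)
    exact hne x hx (h1.trans h2.symm)
  -- the edge sets
  set J : Finset E := D.image pe with hJ
  set Fx : V → Finset E := fun x =>
    ((D.filter (fun u => pm u = x)).image pe) ∪ P.filter (fun p => x ∈ ends p) with hFx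
  set nH : V → ℕ := fun x => (if x ∈ D then 1 else 0) + (Fx x).card with hnH
  set distf : V → Option E := fun x =>
    if h : x ∉ D ∧ (Fx x).Nonempty ∧ (Fx x).card % 2 = 0 then some h.2.1.choose else none
    with hdistf
  set col0 : V → Bool := colC rk pm pe D hwf distf nH with hcol0
  set col : E → Bool := fun e =>
    if e ∈ P then Bool.xor (col0 (foot e)) (decide (distf (foot e) = some e))
    else if h2 : ∃ u, u ∈ D ∧ pe u = e then
      Bool.xor (col0 (pm (Classical.choose h2)))
        (decide (distf (pm (Classical.choose h2)) = some e))
    else true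
    with hcol
  -- dist facts
  have hdist_noneD : ∀ x ∈ D, distf x = none := by
    intro x hx
    simp only [hdistf]
    exact dif_neg (by tauto)
  have hdist_some : ∀ x e₀, distf x = some e₀ →
      x ∉ D ∧ e₀ ∈ Fx x ∧ (Fx x).card % 2 = 0 := by
    intro x e₀ hx
    simp only [hdistf] at hx
    by_cases h : x ∉ D ∧ (Fx x).Nonempty ∧ (Fx x).card % 2 = 0
    · rw [dif_pos h] at hx
      have := h.2.1.choose_spec
      cases hx
      exact ⟨h.1, this, h.2.2⟩
    · rw [dif_neg h] at hx; cases hx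
  have hdist_none : ∀ x, x ∉ D → (Fx x).card ≠ 0 → (Fx x).card % 2 = 0 →
      ∃ e₀, distf x = some e₀ := by
    intro x h1 h2 h3
    have hg : x ∉ D ∧ (Fx x).Nonempty ∧ (Fx x).card % 2 = 0 :=
      ⟨h1, Finset.card_ne_zero.mp h2, h3⟩
    simp only [hdistf]
    rw [dif_pos hg]
    exact ⟨_, rfl⟩
  -- col on parent edges
  have hcol_pe : ∀ x ∈ D, col (pe x)
      = Bool.xor (col0 (pm x)) (decide (distf (pm x) = some (pe x))) := by
    intro x hx
    simp only [hcol]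
    rw [if_neg (hpeP x hx)]
    have h2 : ∃ u, u ∈ D ∧ pe u = pe x := ⟨x, hx, rfl⟩
    rw [dif_pos h2]
    have hcc : Classical.choose h2 = x :=
      hinj _ (Classical.choose_spec h2).1 x hx (Classical.choose_spec h2).2
    rw [hcc]
  -- col0 unfolding on D
  have hcol0D : ∀ x ∈ D, col0 x =
      (if nH x % 2 = 1 then col (pe x) else !(col (pe x))) := by
    intro x hx
    simp only [hcol0]
    rw [colC]
    rw [dif_pos hx]
    rw [hcol_pe x hx]
    simp only [← hcol0]
    congr 1
    · exact congrArg (Bool.xor _) decide_irrel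
    · exact congrArg (fun b => !(Bool.xor (col0 (pm x)) b)) decide_irrel
  -- membership in Fx
  have hFx_mem : ∀ x, x ∈ U → ∀ e, (e ∈ Fx x ↔
      ((∃ u, u ∈ D ∧ pm u = x ∧ e = pe u) ∨ (e ∈ P ∧ x ∈ ends e))) := by
    intro x hxU e
    simp only [hFx]
    simp only [Finset.mem_union, Finset.mem_image, Finset.mem_filter]
    constructor
    · rintro (⟨u, hu, rfl⟩ | ⟨h1, h2⟩)
      · exact Or.inl ⟨u, hu.1, hu.2, rfl⟩
      · exact Or.inr ⟨h1, h2⟩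
    · rintro (⟨u, h1, h2, rfl⟩ | ⟨h1, h2⟩)
      · exact Or.inl ⟨u, ⟨h1, h2⟩, rfl⟩
      · exact Or.inr ⟨h1, h2⟩
  -- col on free edges at x
  have hcol_Fx : ∀ x, x ∈ U → ∀ e ∈ Fx x,
      col e = Bool.xor (col0 x) (decide (distf x = some e)) := by
    intro x hxU e he
    rcases (hFx_mem x hxU e).mp he with ⟨u, hu, hpmu, rfl⟩ | ⟨h1, h2⟩
    · rw [hcol]
      simp only
      rw [if_neg (hpeP u hu)]
      have h2 : ∃ u', u' ∈ D ∧ pe u' = pe u := ⟨u, hu, rfl⟩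
      rw [dif_pos h2]
      have hcc : Classical.choose h2 = u :=
        hinj _ (Classical.choose_spec h2).1 u hu (Classical.choose_spec h2).2
      rw [hcc, hpmu]
    · rw [hcol]
      simp only
      rw [if_pos h1]
      have : foot e = x := (hother e h1 x hxU h2).symm
      rw [this]
    -- parent edge not among free edges
  have hpexFx : ∀ x, x ∈ U → x ∈ D → pe x ∉ Fx x := by
    intro x hxU hx hmem
    rcases (hFx_mem x hxU _).mp hmem with ⟨u, hu, hpmu, hpe⟩ | ⟨h1, _⟩
    · have : x = u := hinj x hx u hu hpe
      rw [← this] at hpmu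
      exact hne x hx hpmu.symm
    · exact hpeP x hx h1
  -- splitting the edges at x
  have hsplit : ∀ x, x ∈ U →
      (J ∪ P).filter (fun e => x ∈ ends e)
        = (if x ∈ D then {pe x} else ∅) ∪ Fx x := by
    intro x hxU
    ext e
    simp only [Finset.mem_filter, Finset.mem_union]
    constructor
    · rintro ⟨he, hxe⟩
      rcases he with heJ | heP
      · rw [hJ] at heJ
        obtain ⟨u, hu, rfl⟩ := Finset.mem_image.mp heJ
        rw [hends u hu, Sym2.mem_iff] at hxe
        rcases hxe with rfl | hxpm
        · left; rw [if_pos hu]; exact Finset.mem_singleton_self _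
        · right
          exact (hFx_mem x hxU _).mpr (Or.inl ⟨u, hu, hxpm.symm, rfl⟩)
      · right
        exact (hFx_mem x hxU _).mpr (Or.inr ⟨heP, hxe⟩)
    · rintro (hif | hFxe)
      · by_cases hxD : x ∈ D
        · rw [if_pos hxD] at hif
          rw [Finset.mem_singleton] at hif
          subst hif
          exact ⟨Or.inl (Finset.mem_image_of_mem pe hxD), hmempe x hxD⟩
        · rw [if_neg hxD] at hif; simp at hif
      · rcases (hFx_mem x hxU _).mp hFxe with ⟨u, hu, hpmu, rfl⟩ | ⟨h1, h2⟩
        · refine ⟨Or.inl (Finset.mem_image_of_mem pe hu), ?_⟩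
          rw [hends u hu, Sym2.mem_iff]
          right; exact hpmu.symm
        · exact ⟨Or.inr h1, h2⟩
  -- the counting function
  have hcard : ∀ x, x ∈ U → ∀ b : Bool,
      (((J ∪ P).filter (fun e => x ∈ ends e)).filter (fun e => col e = b)).card
        = (if x ∈ D ∧ col (pe x) = b then 1 else 0)
          + ((Fx x).filter (fun e => col e = b)).card := by
    intro x hxU b
    rw [hsplit x hxU, filter_union, card_union_of_disjoint]
    · congr 1
      by_cases hxD : x ∈ D
      · rw [if_pos hxD]
        by_cases hcb : col (pe x) = b
        · rw [if_pos ⟨hxD, hcb⟩, Finset.filter_singleton, if_pos hcb, Finset.card_singleton]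
        · rw [if_neg (fun hh => hcb hh.2), Finset.filter_singleton, if_neg hcb,
            Finset.card_empty]
      · rw [if_neg hxD, if_neg (fun hh => hxD hh.1), Finset.filter_empty, Finset.card_empty]
    · apply Finset.disjoint_filter_filter
      by_cases hxD : x ∈ D
      · rw [if_pos hxD]
        rw [Finset.disjoint_singleton_left]
        exact hpexFx x hxU hxD
      · rw [if_neg hxD]; exact Finset.disjoint_empty_left _
  -- main odd-or-zero property
  have hcnt : ∀ x, x ∈ U → ∀ b : Bool,
      (((J ∪ P).filter (fun e => x ∈ ends e)).filter (fun e => col e = b)).card = 0 ∨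
      (((J ∪ P).filter (fun e => x ∈ ends e)).filter (fun e => col e = b)).card % 2 = 1 := by
    intro x hxU b
    rw [hcard x hxU b]
    by_cases hxD : x ∈ D
    · have hdn := hdist_noneD x hxD
      have hall : ∀ e ∈ Fx x, col e = col0 x := by
        intro e he
        rw [hcol_Fx x hxU e he, hdn]
        simp
      have hc0 := hcol0D x hxD
      have hnHx : nH x = 1 + (Fx x).card := by
        simp only [hnH]; rw [if_pos hxD]
      by_cases hpar : nH x % 2 = 1
      · rw [if_pos hpar] at hc0
        by_cases hb : col (pe x) = b
        · right
          rw [if_pos ⟨hxD, hb⟩]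
          have hfull : (Fx x).filter (fun e => col e = b) = Fx x :=
            Finset.filter_true_of_mem (fun e he => by rw [hall e he, hc0, hb])
          rw [hfull]
          omega
        · left
          rw [if_neg (fun hh => hb hh.2)]
          have hempty : (Fx x).filter (fun e => col e = b) = ∅ := by
            rw [Finset.filter_eq_empty_iff]
            intro e he hbe
            exact hb (by rw [← hbe, hall e he, hc0])
          rw [hempty]
          simp
      · rw [if_neg hpar] at hc0
        by_cases hb : col (pe x) = b
        · right
          rw [if_pos ⟨hxD, hb⟩]
          have hempty : (Fx x).filter (fun e => col e = b) = ∅ := by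
            rw [Finset.filter_eq_empty_iff]
            intro e he hbe
            have : col e = col (pe x) := by rw [hbe, hb]
            rw [hall e he, hc0] at this
            exact Bool.not_ne_self (col (pe x)) this
          rw [hempty]
          simp
        · right
          rw [if_neg (fun hh => hb hh.2)]
          have hb' : b = !(col (pe x)) := bool_eq_not hb
          have hfull : (Fx x).filter (fun e => col e = b) = Fx x :=
            Finset.filter_true_of_mem (fun e he => by rw [hall e he, hc0, hb'])
          rw [hfull]
          omega
    · rw [if_neg (fun hh => hxD hh.1)]
      rcases hdx : distf x with _ | e₀
      · have hall : ∀ e ∈ Fx x, col e = col0 x := by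
          intro e he
          rw [hcol_Fx x hxU e he, hdx]
          simp
        by_cases hb : b = col0 x
        · subst hb
          have hfull : (Fx x).filter (fun e => col e = col0 x) = Fx x :=
            Finset.filter_true_of_mem hall
          rw [hfull]
          by_cases hodd : (Fx x).card % 2 = 1
          · right; simpa using hodd
          · left
            by_contra hnz
            obtain ⟨e₀, he₀⟩ := hdist_none x hxD (by simpa using hnz) (by omega)
            rw [hdx] at he₀
            cases he₀
        · left
          have hempty : (Fx x).filter (fun e => col e = b) = ∅ := by
            rw [Finset.filter_eq_empty_iff]
            intro e he hbe
            exact hb (by rw [← hbe, hall e he])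
          rw [hempty]
          simp
      · obtain ⟨_, he₀Fx, heven⟩ := hdist_some x e₀ hdx
        have hcole : ∀ e ∈ Fx x, col e = (if e = e₀ then !(col0 x) else col0 x) := by
          intro e he
          rw [hcol_Fx x hxU e he, hdx]
          by_cases hee : e = e₀
          · subst hee
            rw [if_pos rfl]
            simp
          · rw [if_neg hee]
            have : ¬ (some e₀ = some e) := fun hh => hee (Option.some_inj.mp hh).symm
            simp [this]
        by_cases hb : b = col0 x
        · subst hb
          right
          have hfilter : (Fx x).filter (fun e => col e = col0 x) = Fx x \ {e₀} := by
            ext e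
            simp only [Finset.mem_filter, Finset.mem_sdiff, Finset.mem_singleton]
            constructor
            · rintro ⟨he, hce⟩
              refine ⟨he, fun hee => ?_⟩
              rw [hcole e he, if_pos hee] at hce
              exact Bool.not_ne_self _ hce
            · rintro ⟨he, hee⟩
              exact ⟨he, by rw [hcole e he, if_neg hee]⟩
          rw [hfilter, Finset.card_sdiff_of_subset (Finset.singleton_subset_iff.mpr he₀Fx),
            Finset.card_singleton]
          have hpos : 1 ≤ (Fx x).card := Finset.card_pos.mpr ⟨e₀, he₀Fx⟩
          omega
        · right
          have hb' : b = !(col0 x) := bool_eq_not (fun hh => hb hh.symm)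
          subst hb'
          have hfilter : (Fx x).filter (fun e => col e = !(col0 x)) = {e₀} := by
            ext e
            simp only [Finset.mem_filter, Finset.mem_singleton]
            constructor
            · rintro ⟨he, hce⟩
              by_contra hee
              rw [hcole e he, if_neg hee] at hce
              exact Bool.not_ne_self _ hce.symm
            · rintro rfl
              exact ⟨he₀Fx, by rw [hcole _ he₀Fx, if_pos rfl]⟩
          rw [hfilter, Finset.card_singleton]
    -- final classes
  set B : Finset E := (J ∪ P).filter (fun e => col e = true) with hB
  set C : Finset E := (J ∪ P).filter (fun e => col e = false) with hC
  have hdisjBC : Disjoint B C := by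
    rw [Finset.disjoint_left]
    intro e he1 he2
    rw [hB, Finset.mem_filter] at he1
    rw [hC, Finset.mem_filter] at he2
    rw [he1.2] at he2
    cases he2.2
  have hBC : B ∪ C = J ∪ P := by
    rw [hB, hC, ← Finset.filter_or, Finset.filter_true_of_mem]
    intro e _
    cases col e
    · exact Or.inr rfl
    · exact Or.inl rfl
  have hdegB : ∀ (x : V) (b : Bool), degF ends ((J ∪ P).filter (fun e => col e = b)) x
      = (((J ∪ P).filter (fun e => x ∈ ends e)).filter (fun e => col e = b)).card := by
    intro x b
    unfold degF
    rw [Finset.filter_comm]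
  have hdisjJP : Disjoint J P := by
    rw [Finset.disjoint_left]
    intro e heJ heP
    rw [hJ] at heJ
    obtain ⟨u, hu, rfl⟩ := Finset.mem_image.mp heJ
    exact hpeP u hu heP
  have hdegJ : ∀ x, degF ends J x
      = (if x ∈ D then 1 else 0) + (D.filter (fun u => pm u = x)).card := by
    intro x
    unfold degF
    have himg : J.filter (fun e => x ∈ ends e)
        = (D.filter (fun u => x ∈ ends (pe u))).image pe := by
      rw [hJ]
      ext e
      simp only [Finset.mem_filter, Finset.mem_image]
      constructor
      · rintro ⟨⟨u, hu, rfl⟩, hx⟩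
        exact ⟨u, ⟨hu, hx⟩, rfl⟩
      · rintro ⟨u, ⟨hu, hx⟩, rfl⟩
        exact ⟨⟨u, hu, rfl⟩, hx⟩
    rw [himg, Finset.card_image_of_injOn
      (fun a ha b hb hab => hinj a (Finset.mem_of_mem_filter a ha) b
        (Finset.mem_of_mem_filter b hb) hab)]
    have hsplit2 : D.filter (fun u => x ∈ ends (pe u))
        = (if x ∈ D then {x} else ∅) ∪ D.filter (fun u => pm u = x) := by
      ext u
      simp only [Finset.mem_filter, Finset.mem_union]
      constructor
      · rintro ⟨hu, hx⟩
        rw [hends u hu, Sym2.mem_iff] at hx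
        rcases hx with rfl | hx
        · left; rw [if_pos hu]; exact Finset.mem_singleton_self _
        · right; exact ⟨hu, hx.symm⟩
      · rintro (hif | ⟨hu, hpmu⟩)
        · by_cases hxD : x ∈ D
          · rw [if_pos hxD, Finset.mem_singleton] at hif
            subst hif
            exact ⟨hxD, hmempe _ hxD⟩
          · rw [if_neg hxD] at hif; simp at hif
        · refine ⟨hu, ?_⟩
          rw [hends u hu, Sym2.mem_iff]
          right
          exact hpmu.symm
    rw [hsplit2, card_union_of_disjoint]
    · congr 1
      by_cases hxD : x ∈ D
      · rw [if_pos hxD, if_pos hxD, Finset.card_singleton]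
      · rw [if_neg hxD, if_neg hxD, Finset.card_empty]
    · by_cases hxD : x ∈ D
      · rw [if_pos hxD, Finset.disjoint_singleton_left, Finset.mem_filter]
        rintro ⟨_, hpmx⟩
        exact hne x hxD hpmx.symm
      · rw [if_neg hxD]
        exact Finset.disjoint_empty_left _
  have hdegJ0 : ∀ x, x ∉ U → degF ends J x = 0 := by
    intro x hxU
    apply degF_zero
    intro e he
    rw [hJ] at he
    obtain ⟨u, hu, rfl⟩ := Finset.mem_image.mp he
    rw [hends u hu, Sym2.mem_iff]
    rintro (rfl | hx)
    · exact hxU (hDU _ hu)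
    · rw [hx] at hxU
      exact hxU (hpmU _ hu)
  have hsumBC : ∀ x, degF ends B x + degF ends C x = degF ends (J ∪ P) x := by
    intro x
    rw [hdegB x true, hdegB x false]
    have hneg : ((J ∪ P).filter (fun e => x ∈ ends e)).filter (fun e => ¬ (col e = true))
        = ((J ∪ P).filter (fun e => x ∈ ends e)).filter (fun e => col e = false) := by
      apply Finset.filter_congr
      intro e _
      cases col e <;> simp
    rw [← hneg]
    exact Finset.card_filter_add_card_filter_not (p := fun e => col e = true)
  have hdegJP : ∀ x, degF ends (J ∪ P) x = degF ends J x + degF ends P x :=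
    degF_union ends hdisjJP
  refine ⟨B, C, hdisjBC, ?_, ?_, ?_, ?_, ?_⟩
  · rw [hBC]
    exact Finset.subset_union_right
  · intro e he
    rw [hBC] at he
    rcases Finset.mem_union.mp he with heJ | heP
    · rw [hJ] at heJ
      obtain ⟨u, hu, rfl⟩ := Finset.mem_image.mp heJ
      exact Or.inr ⟨u, (hDmem u hu).1, (hDmem u hu).2, rfl⟩
    · exact Or.inl heP
  · intro x hxU
    constructor
    · rw [hdegB x true]
      rcases hcnt x hxU true with h | h
      · exact Or.inl h
      · exact Or.inr (Nat.odd_iff.mpr h)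
    · rw [hdegB x false]
      rcases hcnt x hxU false with h | h
      · exact Or.inl h
      · exact Or.inr (Nat.odd_iff.mpr h)
  · intro x hxU
    rw [hsumBC x, hdegJP x]
    push_cast
    have hJz : ((degF ends J x : ℕ) : ZMod 2)
        = (if x ∈ T then 1 else 0) := by
      have h1 : ((degF ends J x : ℕ) : ZMod 2) = bnd pm D x := by
        rw [hdegJ x]
        unfold bnd
        by_cases hxD : x ∈ D
        · rw [if_pos hxD, if_pos hxD]; push_cast; ring
        · rw [if_neg hxD, if_neg hxD]; push_cast; ring
      rw [h1, hbnd x, hTcard, zero_mul, add_zero]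
    rw [hJz]
  · intro x hxU
    rw [hsumBC x, hdegJP x, hdegJ0 x hxU, zero_add]


lemma assemble {V E : Type*} [Fintype V] [Fintype E] (ends : E → Sym2 V) (f : E)
    (B C : Finset E) (hdisj : Disjoint B C) (hfB : f ∉ B) (hfC : f ∉ C)
    (hB : ∀ u, degF ends B u = 0 ∨ Odd (degF ends B u))
    (hC : ∀ u, degF ends C u = 0 ∨ Odd (degF ends C u))
    (hA : ∀ u, degF ends (Finset.univ.filter (fun e => e ≠ f ∧ e ∉ B ∧ e ∉ C)) u = 0 ∨
      Odd (degF ends (Finset.univ.filter (fun e => e ≠ f ∧ e ∉ B ∧ e ∉ C)) u)) :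
    ∃ φ : E → Fin 3, ∀ (u : V) (j : Fin 3),
      {e | e ≠ f ∧ φ e = j ∧ u ∈ ends e}.ncard = 0 ∨
        Odd {e | e ≠ f ∧ φ e = j ∧ u ∈ ends e}.ncard := by
  classical
  refine ⟨fun e => if e ∈ B then 0 else if e ∈ C then 1 else 2, fun u j => ?_⟩
  fin_cases j
  · show {e | e ≠ f ∧ (if e ∈ B then (0 : Fin 3) else if e ∈ C then 1 else 2) = 0 ∧ u ∈ ends e}.ncard = 0 ∨
      Odd {e | e ≠ f ∧ (if e ∈ B then (0 : Fin 3) else if e ∈ C then 1 else 2) = 0 ∧ u ∈ ends e}.ncard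
    have hset : {e | e ≠ f ∧ (if e ∈ B then (0 : Fin 3) else if e ∈ C then 1 else 2) = 0
        ∧ u ∈ ends e} = ↑(B.filter (fun e => u ∈ ends e)) := by
      ext e
      simp only [Set.mem_setOf_eq, Finset.coe_filter, Finset.mem_univ]
      constructor
      · rintro ⟨hne, hφ, hu⟩
        refine ⟨?_, hu⟩
        by_contra heB
        rw [if_neg heB] at hφ
        by_cases heC : e ∈ C
        · rw [if_pos heC] at hφ; exact absurd hφ (by decide)
        · rw [if_neg heC] at hφ; exact absurd hφ (by decide)
      · rintro ⟨heB, hu⟩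
        exact ⟨fun hh => hfB (hh ▸ heB), by rw [if_pos heB], hu⟩
    rw [hset, Set.ncard_coe_finset]
    exact hB u
  · show {e | e ≠ f ∧ (if e ∈ B then (0 : Fin 3) else if e ∈ C then 1 else 2) = 1 ∧ u ∈ ends e}.ncard = 0 ∨
      Odd {e | e ≠ f ∧ (if e ∈ B then (0 : Fin 3) else if e ∈ C then 1 else 2) = 1 ∧ u ∈ ends e}.ncard
    have hset : {e | e ≠ f ∧ (if e ∈ B then (0 : Fin 3) else if e ∈ C then 1 else 2) = 1
        ∧ u ∈ ends e} = ↑(C.filter (fun e => u ∈ ends e)) := by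
      ext e
      simp only [Set.mem_setOf_eq, Finset.coe_filter, Finset.mem_univ]
      constructor
      · rintro ⟨hne, hφ, hu⟩
        refine ⟨?_, hu⟩
        by_contra heC
        by_cases heB : e ∈ B
        · rw [if_pos heB] at hφ; exact absurd hφ (by decide)
        · rw [if_neg heB, if_neg heC] at hφ; exact absurd hφ (by decide)
      · rintro ⟨heC, hu⟩
        have heB : e ∉ B := fun heB => (Finset.disjoint_left.mp hdisj) heB heC
        exact ⟨fun hh => hfC (hh ▸ heC), by rw [if_neg heB, if_pos heC], hu⟩
    rw [hset, Set.ncard_coe_finset]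
    exact hC u
  · show {e | e ≠ f ∧ (if e ∈ B then (0 : Fin 3) else if e ∈ C then 1 else 2) = 2 ∧ u ∈ ends e}.ncard = 0 ∨
      Odd {e | e ≠ f ∧ (if e ∈ B then (0 : Fin 3) else if e ∈ C then 1 else 2) = 2 ∧ u ∈ ends e}.ncard
    have hset : {e | e ≠ f ∧ (if e ∈ B then (0 : Fin 3) else if e ∈ C then 1 else 2) = 2
        ∧ u ∈ ends e}
        = ↑((Finset.univ.filter (fun e => e ≠ f ∧ e ∉ B ∧ e ∉ C)).filter
            (fun e => u ∈ ends e)) := by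
      ext e
      simp only [Set.mem_setOf_eq, Finset.coe_filter, Finset.mem_univ, Finset.mem_filter,
        Finset.mem_univ, true_and]
      constructor
      · rintro ⟨hne, hφ, hu⟩
        by_cases heB : e ∈ B
        · rw [if_pos heB] at hφ; exact absurd hφ (by decide)
        · by_cases heC : e ∈ C
          · rw [if_neg heB, if_pos heC] at hφ; exact absurd hφ (by decide)
          · exact ⟨⟨hne, heB, heC⟩, hu⟩
      · rintro ⟨⟨hne, heB, heC⟩, hu⟩
        exact ⟨hne, by rw [if_neg heB, if_neg heC], hu⟩
    rw [hset, Set.ncard_coe_finset]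
    exact hA u

lemma degF_empty {V E : Type*} [Fintype V] [Fintype E] (ends : E → Sym2 V) (u : V) :
    degF ends (∅ : Finset E) u = 0 := by
  simp [degF]

lemma degF_singleton {V E : Type*} [Fintype V] [Fintype E] (ends : E → Sym2 V) (f : E) (u : V) :
    degF ends ({f} : Finset E) u = if u ∈ ends f then 1 else 0 := by
  unfold degF
  rw [Finset.filter_singleton]
  split <;> simp

lemma deg_split {V E : Type*} [Fintype V] [Fintype E] (ends : E → Sym2 V) (f : E)
    (B C : Finset E) (hdisj : Disjoint B C) (hfB : f ∉ B) (hfC : f ∉ C) (u : V) :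
    degF ends Finset.univ u
      = degF ends (Finset.univ.filter (fun e => e ≠ f ∧ e ∉ B ∧ e ∉ C)) u
        + ((if u ∈ ends f then 1 else 0) + (degF ends B u + degF ends C u)) := by
  classical
  have hU : (Finset.univ : Finset E)
      = (Finset.univ.filter (fun e => e ≠ f ∧ e ∉ B ∧ e ∉ C)) ∪ ({f} ∪ (B ∪ C)) := by
    ext e
    simp only [Finset.mem_univ, Finset.mem_union, Finset.mem_filter, Finset.mem_singleton,
      true_iff, true_and]
    by_cases h1 : e = f
    · tauto
    · by_cases h2 : e ∈ B
      · tauto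
      · by_cases h3 : e ∈ C <;> tauto
  have hd1 : Disjoint B C := hdisj
  have hd2 : Disjoint ({f} : Finset E) (B ∪ C) := by
    rw [Finset.disjoint_singleton_left, Finset.mem_union]
    tauto
  have hd3 : Disjoint (Finset.univ.filter (fun e => e ≠ f ∧ e ∉ B ∧ e ∉ C))
      ({f} ∪ (B ∪ C)) := by
    rw [Finset.disjoint_left]
    intro e he hmem
    rw [Finset.mem_filter] at he
    rcases Finset.mem_union.mp hmem with h | h
    · exact he.2.1 (Finset.mem_singleton.mp h)
    · rcases Finset.mem_union.mp h with h | h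
      · exact he.2.2.1 h
      · exact he.2.2.2 h
  conv_lhs => rw [hU]
  rw [degF_union ends hd3, degF_union ends hd2, degF_union ends hd1, degF_singleton]

/-- The case where `|V|` is even. -/
lemma evenCase {V E : Type*} [Fintype V] [Fintype E]
    (ends : E → Sym2 V)
    (hloopless : ∀ e, ¬ (ends e).IsDiag)
    (hconn : ∀ u u' : V,
      Relation.ReflTransGen (fun a b => ∃ e, ends e = s(a, b)) u u')
    (v w : V)
    (e1 e2 : E) (he1 : ends e1 = s(v, w)) (he2 : ends e2 = s(v, w)) (hne12 : e1 ≠ e2)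
    (heven : Even (Fintype.card V)) :
    ∃ f : E, ∃ φ : E → Fin 3, ∀ (u : V) (j : Fin 3),
      {e | e ≠ f ∧ φ e = j ∧ u ∈ ends e}.ncard = 0 ∨
        Odd {e | e ≠ f ∧ φ e = j ∧ u ∈ ends e}.ncard := by
  classical
  have : Nonempty E := ⟨e1⟩
  -- the graph without e1
  set E' : Finset E := Finset.univ.filter (fun e => e ≠ e1) with hE'
  set degG' : V → ℕ := fun u => degF ends E' u with hdegG'
  -- connectivity structure avoiding e1
  obtain ⟨rk, pm, pe, hst'⟩ := struct ends Set.univ (fun e => e ≠ e1)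
    (fun a b => ∃ e, e ≠ e1 ∧ ends e = s(a, b))
    (fun a b hab => ⟨Set.mem_univ b, hab⟩) v (Set.mem_univ v)
    (fun u _ => by
      refine Relation.ReflTransGen.mono ?_ _ _ (hconn v u)
      rintro a b ⟨e, he⟩
      by_cases hee : e = e1
      · exact ⟨e2, fun hh => hne12 hh.symm, by rw [he2, ← he1, ← hee, he]⟩
      · exact ⟨e, hee, he⟩)
  have hst : ∀ x, x ∈ Set.univ → x ≠ v → pm x ∈ Set.univ ∧ rk (pm x) < rk x ∧
      ends (pe x) = s(x, pm x) :=
    fun x hx hxr => ⟨(hst' x hx hxr).1, (hst' x hx hxr).2.1, (hst' x hx hxr).2.2.2⟩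
  have hpe_ne : ∀ x, x ∈ Set.univ → x ≠ v → pe x ≠ e1 :=
    fun x hx hxr => (hst' x hx hxr).2.2.1
  -- the target parity set
  set T₀ : Finset V := Finset.univ.filter (fun u => degG' u % 2 = 0) with hT₀
  have hT₀card : ((T₀.card : ℕ) : ZMod 2) = 0 := by
    have h1 : T₀.card = ∑ u : V, if degG' u % 2 = 0 then 1 else 0 := by
      rw [hT₀, Finset.card_filter]
    have h2 : ((T₀.card : ℕ) : ZMod 2)
        = ∑ u : V, ((1 : ZMod 2) + (degG' u : ZMod 2)) := by
      rw [h1]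
      push_cast
      refine Finset.sum_congr rfl fun u _ => ?_
      rcases zmod_cases (degG' u) with h | h
      · have h0 : degG' u % 2 = 0 := Nat.even_iff.mp (even_of_zmod h)
        rw [if_pos h0, h, add_zero]
      · have h0 : ¬ (degG' u % 2 = 0) := by
          rw [Nat.odd_iff.mp (odd_of_zmod h)]; norm_num
        rw [if_neg h0, h]
        decide
    rw [h2, Finset.sum_add_distrib]
    have h3 : ∑ u : V, (degG' u : ZMod 2) = 0 := by
      simp only [hdegG']
      exact handshake ends hloopless E'
    rw [h3, add_zero, Finset.sum_const, Finset.card_univ, nsmul_eq_mul, mul_one]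
    exact zmod_of_even heven
  -- apply the main construction
  obtain ⟨B, C, hdisjBC, _, hmem, hodd, hpar, _⟩ := FPmain ends hloopless Set.univ v rk pm pe hst
    (∅ : Finset E) (fun _ => v) (by simp) (by simp)
    T₀ (fun t _ => Set.mem_univ t) hT₀card
  have hBCne1 : ∀ e ∈ B ∪ C, e ≠ e1 := by
    intro e he
    rcases hmem e he with h | ⟨u, hu, hur, rfl⟩
    · simp at h
    · exact hpe_ne u hu hur
  have hfB : e1 ∉ B := fun h => hBCne1 e1 (Finset.mem_union_left _ h) rfl
  have hfC : e1 ∉ C := fun h => hBCne1 e1 (Finset.mem_union_right _ h) rfl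
  refine ⟨e1, assemble ends e1 B C hdisjBC hfB hfC
    (fun u => (hodd u (Set.mem_univ u)).1) (fun u => (hodd u (Set.mem_univ u)).2)
    (fun u => ?_)⟩
  right
  apply odd_of_zmod
  -- the ℕ splitting
  have hnat := deg_split ends e1 B C hdisjBC hfB hfC u
  have hzm := congrArg (fun n : ℕ => (n : ZMod 2)) hnat
  push_cast at hzm
  -- degrees without e1
  have hnat2 : degF ends Finset.univ u = degG' u + (if u ∈ ends e1 then 1 else 0) := by
    have hsplit : (Finset.univ : Finset E) = E' ∪ {e1} := by
      ext e
      simp only [Finset.mem_univ, Finset.mem_union, Finset.mem_singleton, hE',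
        Finset.mem_filter, true_iff, true_and]
      tauto
    rw [hsplit, degF_union ends (by
      rw [Finset.disjoint_singleton_right, hE', Finset.mem_filter]
      tauto), degF_singleton, hdegG']
  have hzm2 := congrArg (fun n : ℕ => (n : ZMod 2)) hnat2
  push_cast at hzm2
  have hBCpar := hpar u (Set.mem_univ u)
  rw [degF_empty] at hBCpar
  push_cast at hBCpar
  -- now compute
  have hT : ((if u ∈ T₀ then (1 : ZMod 2) else 0)) + (degG' u : ZMod 2) = 1 := by
    by_cases h : degG' u % 2 = 0
    · rw [if_pos (by rw [hT₀, Finset.mem_filter]; exact ⟨Finset.mem_univ u, h⟩)]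
      rw [zmod_of_even (Nat.even_iff.mpr h), add_zero]
    · rw [if_neg (by rw [hT₀, Finset.mem_filter]; tauto)]
      rw [zmod_of_odd (Nat.odd_iff.mpr (by omega)), zero_add]
  have hgoal : (degF ends (Finset.univ.filter (fun e => e ≠ e1 ∧ e ∉ B ∧ e ∉ C)) u : ZMod 2)
      = 1 := by
    have hx : ((if u ∈ ends e1 then (1 : ZMod 2) else 0))
        + ((if u ∈ ends e1 then (1 : ZMod 2) else 0)) = 0 := by
      by_cases h : u ∈ ends e1
      · rw [if_pos h]; decide
      · rw [if_neg h]; decide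
    have hxT : ((if u ∈ T₀ then (1 : ZMod 2) else 0))
        + ((if u ∈ T₀ then (1 : ZMod 2) else 0)) = 0 := by
      by_cases h : u ∈ T₀
      · rw [if_pos h]; decide
      · rw [if_neg h]; decide
    calc (degF ends (Finset.univ.filter (fun e => e ≠ e1 ∧ e ∉ B ∧ e ∉ C)) u : ZMod 2)
        = ((if u ∈ T₀ then (1 : ZMod 2) else 0)) + (degG' u : ZMod 2) := by
          linear_combination -hzm + hzm2 - hBCpar - hxT
      _ = 1 := hT
  exact hgoal

lemma zmod2_eq_iff {a b : ℕ} : (a : ZMod 2) = (b : ZMod 2) ↔ a % 2 = b % 2 := by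
  rw [ZMod.natCast_eq_natCast_iff]
  exact Iff.rfl

/-- The case where `|V|` is odd. -/
lemma oddCase {V E : Type*} [Fintype V] [Fintype E]
    (ends : E → Sym2 V)
    (hloopless : ∀ e, ¬ (ends e).IsDiag)
    (v w : V) (hvw : v ≠ w)
    (hdegv : Odd (degF ends Finset.univ v)) (hdegw : Odd (degF ends Finset.univ w))
    (e1 e2 : E) (he1 : ends e1 = s(v, w)) (he2 : ends e2 = s(v, w)) (hne12 : e1 ≠ e2)
    (hbq : ∀ e, ends e = s(v, w) → e = e1 ∨ e = e2)
    (hconnvw : ∀ u u' : V, u ∉ ({v, w} : Set V) → u' ∉ ({v, w} : Set V) →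
      Relation.ReflTransGen
        (fun a b => a ∉ ({v, w} : Set V) ∧ b ∉ ({v, w} : Set V) ∧
          ∃ e, ends e = s(a, b)) u u')
    (hoddV : Odd (Fintype.card V)) :
    ∃ f : E, ∃ φ : E → Fin 3, ∀ (u : V) (j : Fin 3),
      {e | e ≠ f ∧ φ e = j ∧ u ∈ ends e}.ncard = 0 ∨
        Odd {e | e ≠ f ∧ φ e = j ∧ u ∈ ends e}.ncard := by
  classical
  have hNE : Nonempty E := ⟨e1⟩
  set U : Set V := {u | u ∉ ({v, w} : Set V)} with hU
  have hvU : v ∉ U := by simp [hU]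
  have hwU : w ∉ U := by simp [hU]
  have hUmem : ∀ u : V, u ∈ U ↔ (u ≠ v ∧ u ≠ w) := by
    intro u
    simp [hU, Set.mem_insert_iff, not_or]
  -- a root outside {v, w}
  have hcard3 : 3 ≤ Fintype.card V := by
    have h2 : 2 ≤ Fintype.card V := Fintype.one_lt_card_iff_nontrivial.mpr ⟨v, w, hvw⟩
    rcases hoddV with ⟨k, hk⟩
    omega
  obtain ⟨r, hr⟩ : ∃ r, r ∈ (Finset.univ \ ({v, w} : Finset V)) := by
    apply Finset.Nonempty.exists_mem
    rw [← Finset.card_pos, Finset.card_sdiff_of_subset (Finset.subset_univ _), Finset.card_univ,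
      Finset.card_pair hvw]
    omega
  have hrv : r ≠ v := by
    intro h; rw [Finset.mem_sdiff] at hr
    exact hr.2 (by rw [h]; simp)
  have hrw : r ≠ w := by
    intro h; rw [Finset.mem_sdiff] at hr
    exact hr.2 (by rw [h]; simp)
  have hrU : r ∈ U := (hUmem r).mpr ⟨hrv, hrw⟩
  -- structure on U
  obtain ⟨rk, pm, pe, hst'⟩ := struct ends U (fun _ => True)
    (fun a b => a ∉ ({v, w} : Set V) ∧ b ∉ ({v, w} : Set V) ∧ ∃ e, ends e = s(a, b))
    (fun a b hab => ⟨hab.2.1, hab.2.2.elim fun e he => ⟨e, trivial, he⟩⟩) r hrU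
    (fun u hu => hconnvw r u hrU hu)
  have hst : ∀ x, x ∈ U → x ≠ r → pm x ∈ U ∧ rk (pm x) < rk x ∧
      ends (pe x) = s(x, pm x) :=
    fun x hx hxr => ⟨(hst' x hx hxr).1, (hst' x hx hxr).2.1, (hst' x hx hxr).2.2.2⟩
  -- pendant edges
  set P : Finset E := Finset.univ.filter (fun e => v ∈ ends e ∧ ends e ≠ s(v, w)) with hP
  have hPmem : ∀ p, p ∈ P ↔ (v ∈ ends p ∧ ends p ≠ s(v, w)) := by
    intro p; rw [hP, Finset.mem_filter]; simp
  have hPstruct : ∀ p ∈ P, ∃ x, x ∈ U ∧ ends p = s(v, x) := by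
    intro p hp
    rw [hPmem] at hp
    obtain ⟨x, hx⟩ := Sym2.mem_iff_exists.mp hp.1
    refine ⟨x, (hUmem x).mpr ⟨?_, ?_⟩, hx⟩
    · intro h
      subst h
      exact hloopless p (by rw [hx]; exact Sym2.mk_isDiag_iff.mpr rfl)
    · intro h
      subst h
      exact hp.2 hx
  set foot : E → V := fun p => if h : ∃ x, x ∈ U ∧ x ∈ ends p then h.choose else r
    with hfoot
  have hfootP : ∀ p ∈ P, foot p ∈ ends p ∧ foot p ∈ U := by
    intro p hp
    obtain ⟨x, hxU, hx⟩ := hPstruct p hp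
    have hex : ∃ y, y ∈ U ∧ y ∈ ends p :=
      ⟨x, hxU, by rw [hx]; exact Sym2.mem_mk_right v x⟩
    simp only [hfoot]
    rw [dif_pos hex]
    exact ⟨hex.choose_spec.2, hex.choose_spec.1⟩
  have hother : ∀ p ∈ P, ∀ x, x ∈ U → x ∈ ends p → x = foot p := by
    intro p hp x hxU hxe
    obtain ⟨x₀, hx₀U, hx₀⟩ := hPstruct p hp
    have hxx : ∀ y, y ∈ U → y ∈ ends p → y = x₀ := by
      intro y hyU hye
      rw [hx₀, Sym2.mem_iff] at hye
      rcases hye with rfl | h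
      · exact absurd hyU hvU
      · exact h
    have hex : ∃ y, y ∈ U ∧ y ∈ ends p :=
      ⟨x₀, hx₀U, by rw [hx₀]; exact Sym2.mem_mk_right v x₀⟩
    simp only [hfoot]
    rw [dif_pos hex]
    rw [hxx x hxU hxe, hxx _ hex.choose_spec.1 hex.choose_spec.2]
  -- degrees of P
  have hPv : degF ends P v = P.card := by
    unfold degF
    rw [Finset.filter_true_of_mem]
    intro p hp
    exact ((hPmem p).mp hp).1
  have hPw : degF ends P w = 0 := by
    apply degF_zero
    intro p hp hwp
    have h1 := (hPmem p).mp hp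
    exact h1.2 (sym2_eq h1.1 hwp hvw)
  have hPU : ∀ u, u ∈ U → u ∉ ends e1 ∧ u ∉ ends e2 := by
    intro u hu
    rw [hUmem] at hu
    constructor
    · rw [he1, Sym2.mem_iff]; tauto
    · rw [he2, Sym2.mem_iff]; tauto
  -- |P| is odd
  have hPcard : P.card + 2 = degF ends Finset.univ v := by
    unfold degF
    have hsp : Finset.univ.filter (fun e => v ∈ ends e) = P ∪ {e1, e2} := by
      ext e
      simp only [Finset.mem_filter, Finset.mem_univ, true_and, Finset.mem_union,
        Finset.mem_insert, Finset.mem_singleton]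
      constructor
      · intro hv'
        by_cases hb : ends e = s(v, w)
        · right; exact hbq e hb
        · left; rw [hPmem]; exact ⟨hv', hb⟩
      · rintro (hPe | h | h)
        · exact ((hPmem e).mp hPe).1
        · subst h; rw [he1]; exact Sym2.mem_mk_left v w
        · subst h; rw [he2]; exact Sym2.mem_mk_left v w
    rw [hsp, card_union_of_disjoint, Finset.card_pair hne12]
    rw [Finset.disjoint_left]
    intro e he h12
    have h1 := (hPmem e).mp he
    rcases Finset.mem_insert.mp h12 with rfl | h
    · exact h1.2 he1
    · rw [Finset.mem_singleton] at h; subst h; exact h1.2 he2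
  have hPodd : (P.card : ZMod 2) = 1 := by
    have h1 := zmod_of_odd hdegv
    have h2 := congrArg (fun n : ℕ => (n : ZMod 2)) hPcard
    push_cast at h2
    rw [h1] at h2
    have h20 : (2 : ZMod 2) = 0 := by decide
    rw [h20, add_zero] at h2
    exact h2
    -- the parity target set
  set Wfin : Finset V := Finset.univ.filter (fun u => u ∈ U) with hWfin
  set gg : V → ℕ := fun u => degF ends Finset.univ u + degF ends P u with hgg
  set T₁ : Finset V := Wfin.filter (fun u => gg u % 2 = 0) with hT₁
  have hT₁U : ∀ t ∈ T₁, t ∈ U := by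
    intro t ht
    rw [hT₁, Finset.mem_filter] at ht
    exact (Finset.mem_filter.mp ht.1).2
  have hT₁mem : ∀ u, u ∈ U → (u ∈ T₁ ↔ gg u % 2 = 0) := by
    intro u hu
    rw [hT₁, Finset.mem_filter, hWfin, Finset.mem_filter]
    simp [hu]
  have hsplitV : (Finset.univ : Finset V) = Wfin ∪ {v, w} := by
    ext u
    simp only [Finset.mem_univ, true_iff, Finset.mem_union, hWfin, Finset.mem_filter,
      Finset.mem_insert, Finset.mem_singleton, true_and]
    by_cases h1 : u = v
    · tauto
    · by_cases h2 : u = w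
      · tauto
      · left; exact (hUmem u).mpr ⟨h1, h2⟩
  have hdisjW : Disjoint Wfin ({v, w} : Finset V) := by
    rw [Finset.disjoint_right]
    intro u hu hw'
    rw [hWfin, Finset.mem_filter] at hw'
    rcases Finset.mem_insert.mp hu with rfl | h
    · exact hvU hw'.2
    · rw [Finset.mem_singleton] at h; subst h; exact hwU hw'.2
  have hsum : ∀ g : V → ℕ, (∑ u : V, (g u : ZMod 2))
      = (∑ u ∈ Wfin, (g u : ZMod 2)) + ((g v : ZMod 2) + (g w : ZMod 2)) := by
    intro g
    conv_lhs => rw [hsplitV]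
    rw [Finset.sum_union hdisjW, Finset.sum_pair hvw]
  have hcardW : (Fintype.card V : ZMod 2) = (Wfin.card : ZMod 2) + 2 := by
    have h1 : (Finset.univ : Finset V).card = Wfin.card + 2 := by
      rw [hsplitV, card_union_of_disjoint hdisjW, Finset.card_pair hvw]
    rw [← Finset.card_univ, h1]
    push_cast
    ring
  have hT₁card : ((T₁.card : ℕ) : ZMod 2) = 0 := by
    have h2 : ((T₁.card : ℕ) : ZMod 2) = ∑ u ∈ Wfin, ((1 : ZMod 2) + (gg u : ZMod 2)) := by
      have ha : ((T₁.card : ℕ) : ZMod 2) = ∑ u ∈ T₁, (1 : ZMod 2) := by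
        rw [Finset.sum_const, nsmul_eq_mul, mul_one]
      rw [ha, hT₁, Finset.sum_filter]
      refine Finset.sum_congr rfl fun u _ => ?_
      rcases Nat.even_or_odd (gg u) with h | h
      · rw [if_pos (Nat.even_iff.mp h), zmod_of_even h, add_zero]
      · rw [if_neg (by rw [Nat.odd_iff.mp h]; norm_num), zmod_of_odd h]
        decide
    rw [h2, Finset.sum_add_distrib, Finset.sum_const, nsmul_eq_mul, mul_one]
    have hggsum : ∀ u, (gg u : ZMod 2)
        = (degF ends Finset.univ u : ZMod 2) + (degF ends P u : ZMod 2) := by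
      intro u; rw [hgg]; push_cast; ring
    have e3 : (∑ u ∈ Wfin, (gg u : ZMod 2))
        = (∑ u ∈ Wfin, (degF ends Finset.univ u : ZMod 2))
          + (∑ u ∈ Wfin, (degF ends P u : ZMod 2)) := by
      rw [← Finset.sum_add_distrib]
      exact Finset.sum_congr rfl fun u _ => hggsum u
    have eA := hsum (fun u => degF ends Finset.univ u)
    have eP := hsum (fun u => degF ends P u)
    rw [handshake ends hloopless Finset.univ] at eA
    rw [handshake ends hloopless P] at eP
    have hAv : ((degF ends Finset.univ v : ℕ) : ZMod 2) = 1 := zmod_of_odd hdegv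
    have hAw : ((degF ends Finset.univ w : ℕ) : ZMod 2) = 1 := zmod_of_odd hdegw
    have hPv' : ((degF ends P v : ℕ) : ZMod 2) = 1 := by rw [hPv]; exact hPodd
    have hPw' : ((degF ends P w : ℕ) : ZMod 2) = 0 := by rw [hPw]; push_cast; ring
    have hVc : ((Fintype.card V : ℕ) : ZMod 2) = 1 := zmod_of_odd hoddV
    rw [e3]
    rw [hAv, hAw] at eA
    rw [hPv', hPw'] at eP
    have h20 : (2 : ZMod 2) = 0 := by decide
    have hWc : ((Wfin.card : ℕ) : ZMod 2) = 1 := by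
      have hcw := hcardW
      rw [hVc, h20, add_zero] at hcw
      exact hcw.symm
    rw [hWc]
    linear_combination -eA - eP - h20
  -- apply the main construction
  obtain ⟨B₀, C₀, hdisj0, hPsub, hmem0, hodd0, hpar0, hout0⟩ :=
    FPmain ends hloopless U r rk pm pe hst P foot hfootP hother T₁ hT₁U hT₁card
  have hBCnb : ∀ e ∈ B₀ ∪ C₀, ends e ≠ s(v, w) := by
    intro e he hb
    rcases hmem0 e he with hPe | ⟨u, huU, hur, rfl⟩
    · exact ((hPmem e).mp hPe).2 hb
    · have := (hst u huU hur).2.2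
      rw [hb] at this
      rw [Sym2.eq_iff] at this
      rcases this with ⟨h1, _⟩ | ⟨_, h2⟩
      · exact ((hUmem u).mp huU).1 h1.symm
      · exact ((hUmem u).mp huU).2 h2.symm
  have he1BC : e1 ∉ B₀ ∪ C₀ := fun h => hBCnb e1 h he1
  have he2BC : e2 ∉ B₀ ∪ C₀ := fun h => hBCnb e2 h he2
  have houtv := hout0 v hvU
  have houtw := hout0 w hwU
  rw [hPw] at houtw
  rw [hPv] at houtv
  have hB₀w : degF ends B₀ w = 0 := by omega
  have hC₀w : degF ends C₀ w = 0 := by omega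
  have hPcodd : P.card % 2 = 1 := by
    have h1 := Nat.odd_iff.mp hdegv
    omega
  have hvende2 : v ∈ ends e2 := by rw [he2]; exact Sym2.mem_mk_left v w
  have hwende2 : w ∈ ends e2 := by rw [he2]; exact Sym2.mem_mk_right v w
  -- the A-class verification, depending only on B ∪ C
  have hAgen : ∀ B C : Finset E, B ∪ C = (B₀ ∪ C₀) ∪ {e2} → Disjoint B C →
      ∀ u, degF ends (Finset.univ.filter (fun e => e ≠ e1 ∧ e ∉ B ∧ e ∉ C)) u = 0 ∨
        Odd (degF ends (Finset.univ.filter (fun e => e ≠ e1 ∧ e ∉ B ∧ e ∉ C)) u) := by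
    intro B C hBC hdisj u
    have hfB : e1 ∉ B := by
      intro h
      have : e1 ∈ B ∪ C := Finset.mem_union_left _ h
      rw [hBC] at this
      rcases Finset.mem_union.mp this with h' | h'
      · exact he1BC h'
      · exact hne12 (Finset.mem_singleton.mp h')
    have hfC : e1 ∉ C := by
      intro h
      have : e1 ∈ B ∪ C := Finset.mem_union_right _ h
      rw [hBC] at this
      rcases Finset.mem_union.mp this with h' | h'
      · exact he1BC h'
      · exact hne12 (Finset.mem_singleton.mp h')
    have hsplit := deg_split ends e1 B C hdisj hfB hfC u
    have hBCu : degF ends B u + degF ends C u = degF ends ((B₀ ∪ C₀) ∪ {e2}) u := by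
      rw [← hBC, degF_union ends hdisj]
    have he2out : Disjoint (B₀ ∪ C₀) ({e2} : Finset E) := by
      rw [Finset.disjoint_singleton_right]; exact he2BC
    have hH2 : degF ends ((B₀ ∪ C₀) ∪ {e2}) u
        = (degF ends B₀ u + degF ends C₀ u) + (if u ∈ ends e2 then 1 else 0) := by
      rw [degF_union ends he2out, degF_union ends hdisj0, degF_singleton]
    have hggdef : gg u = degF ends Finset.univ u + degF ends P u := rfl
    rcases (show u ∈ U ∨ u = v ∨ u = w by
      by_cases h1 : u = v
      · tauto
      · by_cases h2 : u = w
        · tauto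
        · exact Or.inl ((hUmem u).mpr ⟨h1, h2⟩)) with huU | hueq | hueq
    · -- u ∈ U : odd
      right
      rw [if_neg (hPU u huU).1] at hsplit
      rw [if_neg (hPU u huU).2] at hH2
      rw [hH2] at hBCu
      -- convert the ZMod fact to a mod-2 fact
      have hpar := hpar0 u huU
      have hparN : (degF ends B₀ u + degF ends C₀ u) % 2
          = ((if u ∈ T₁ then 1 else 0) + degF ends P u) % 2 := by
        apply zmod2_eq_iff.mp
        push_cast
        push_cast at hpar
        rw [hpar]
      rw [Nat.odd_iff]
      by_cases hT : u ∈ T₁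
      · have hgz : gg u % 2 = 0 := (hT₁mem u huU).mp hT
        rw [if_pos hT] at hparN
        rw [hggdef] at hgz
        omega
      · have hgz : ¬ (gg u % 2 = 0) := fun hh => hT ((hT₁mem u huU).mpr hh)
        rw [if_neg hT] at hparN
        rw [hggdef] at hgz
        omega
    · -- u = v : zero
      have hueq' := hueq.symm
      subst hueq'
      left
      apply degF_zero
      intro e he hv'
      rw [Finset.mem_filter] at he
      obtain ⟨_, hne, heB, heC⟩ := he
      have heBC : e ∉ (B₀ ∪ C₀) ∪ {e2} := by
        rw [← hBC]
        rw [Finset.mem_union]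
        tauto
      by_cases hb : ends e = s(v, w)
      · rcases hbq e hb with rfl | rfl
        · exact hne rfl
        · exact heBC (Finset.mem_union_right _ (Finset.mem_singleton_self _))
      · have : e ∈ P := (hPmem e).mpr ⟨hv', hb⟩
        exact heBC (Finset.mem_union_left _ (hPsub this))
    · -- u = w : odd
      have hueq' := hueq.symm
      subst hueq'
      right
      rw [if_pos (by rw [he1]; exact Sym2.mem_mk_right v w)] at hsplit
      rw [if_pos hwende2, hB₀w, hC₀w] at hH2
      rw [hH2] at hBCu
      have hAw := Nat.odd_iff.mp hdegw
      rw [Nat.odd_iff]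
      omega
  
  -- add e2 to the deficient side
  have hdeg_adde2 : ∀ (X : Finset E), e2 ∉ X → ∀ u,
      degF ends (X ∪ {e2}) u = degF ends X u + (if u ∈ ends e2 then 1 else 0) := by
    intro X hX u
    rw [degF_union ends (by rw [Finset.disjoint_singleton_right]; exact hX),
      degF_singleton]
  have he2B₀ : e2 ∉ B₀ := fun h => he2BC (Finset.mem_union_left _ h)
  have he2C₀ : e2 ∉ C₀ := fun h => he2BC (Finset.mem_union_right _ h)
  have he1B₀ : e1 ∉ B₀ := fun h => he1BC (Finset.mem_union_left _ h)
  have he1C₀ : e1 ∉ C₀ := fun h => he1BC (Finset.mem_union_right _ h)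
  have htrich : ∀ u : V, u ∈ U ∨ u = v ∨ u = w := fun u => by
    by_cases h1 : u = v
    · tauto
    · by_cases h2 : u = w
      · tauto
      · exact Or.inl ((hUmem u).mpr ⟨h1, h2⟩)
  by_cases hsw : degF ends B₀ v % 2 = 0
  · refine ⟨e1, assemble ends e1 (B₀ ∪ {e2}) C₀
      (Finset.disjoint_union_left.mpr ⟨hdisj0,
        by rw [Finset.disjoint_singleton_left]; exact he2C₀⟩)
      (by rw [Finset.mem_union, Finset.mem_singleton]; rintro (h | h)
          · exact he1B₀ h
          · exact hne12 h)
      he1C₀ ?_ ?_ ?_⟩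
    · intro u
      rw [hdeg_adde2 B₀ he2B₀ u]
      rcases htrich u with huU | hueq | hueq
      · rw [if_neg (hPU u huU).2, add_zero]
        exact (hodd0 u huU).1
      · have h' := hueq.symm; subst h'
        rw [if_pos hvende2]
        right
        rw [Nat.odd_iff]
        omega
      · have h' := hueq.symm; subst h'
        rw [if_pos hwende2, hB₀w]
        right
        simpa using odd_one
    · intro u
      rcases htrich u with huU | hueq | hueq
      · exact (hodd0 u huU).2
      · have h' := hueq.symm; subst h'
        right
        rw [Nat.odd_iff]
        omega
      · have h' := hueq.symm; subst h'
        left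
        exact hC₀w
    · exact hAgen (B₀ ∪ {e2}) C₀ (Finset.union_right_comm B₀ {e2} C₀)
        (Finset.disjoint_union_left.mpr ⟨hdisj0,
          by rw [Finset.disjoint_singleton_left]; exact he2C₀⟩)
  · refine ⟨e1, assemble ends e1 B₀ (C₀ ∪ {e2})
      (Finset.disjoint_union_right.mpr ⟨hdisj0,
        by rw [Finset.disjoint_singleton_right]; exact he2B₀⟩)
      he1B₀
      (by rw [Finset.mem_union, Finset.mem_singleton]; rintro (h | h)
          · exact he1C₀ h
          · exact hne12 h)
      ?_ ?_ ?_⟩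
    · intro u
      rcases htrich u with huU | hueq | hueq
      · exact (hodd0 u huU).1
      · have h' := hueq.symm; subst h'
        right
        rw [Nat.odd_iff]
        omega
      · have h' := hueq.symm; subst h'
        left
        exact hB₀w
    · intro u
      rw [hdeg_adde2 C₀ he2C₀ u]
      rcases htrich u with huU | hueq | hueq
      · rw [if_neg (hPU u huU).2, add_zero]
        exact (hodd0 u huU).2
      · have h' := hueq.symm; subst h'
        rw [if_pos hvende2]
        right
        rw [Nat.odd_iff]
        omega
      · have h' := hueq.symm; subst h'
        rw [if_pos hwende2, hC₀w]
        right
        simpa using odd_one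
    · exact hAgen B₀ (C₀ ∪ {e2}) (Finset.union_assoc B₀ C₀ {e2}).symm
        (Finset.disjoint_union_right.mpr ⟨hdisj0,
          by rw [Finset.disjoint_singleton_right]; exact he2B₀⟩)

/-- Let `G` be a connected loopless multigraph with two odd-degree vertices `v`, `w`
joined by exactly two parallel edges. If `G − v` and `G − {v, w}` are connected, then
there is an edge `f` such that `G \ {f}` admits an odd 3-edge-coloring. -/
theorem stmt_17 {V E : Type*} [Fintype V] [Fintype E]
    (ends : E → Sym2 V)
    (hloopless : ∀ e, ¬ (ends e).IsDiag)
    (hconn : ∀ u u' : V,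
      Relation.ReflTransGen (fun a b => ∃ e, ends e = s(a, b)) u u')
    (v w : V) (hvw : v ≠ w)
    (hdegv : Odd {e | v ∈ ends e}.ncard)
    (hdegw : Odd {e | w ∈ ends e}.ncard)
    (hbouquet : {e | ends e = s(v, w)}.ncard = 2)
    (hconnv : ∀ u u' : V, u ≠ v → u' ≠ v →
      Relation.ReflTransGen
        (fun a b => a ≠ v ∧ b ≠ v ∧ ∃ e, ends e = s(a, b)) u u')
    (hconnvw : ∀ u u' : V, u ∉ ({v, w} : Set V) → u' ∉ ({v, w} : Set V) →
      Relation.ReflTransGen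
        (fun a b => a ∉ ({v, w} : Set V) ∧ b ∉ ({v, w} : Set V) ∧
          ∃ e, ends e = s(a, b)) u u') :
    ∃ f : E, ∃ φ : E → Fin 3, ∀ (u : V) (j : Fin 3),
      {e | e ≠ f ∧ φ e = j ∧ u ∈ ends e}.ncard = 0 ∨
        Odd {e | e ≠ f ∧ φ e = j ∧ u ∈ ends e}.ncard := by
  classical
  -- convert degrees
  have hsetv : {e | v ∈ ends e} = ↑(Finset.univ.filter (fun e => v ∈ ends e)) := by
    ext e; simp
  have hsetw : {e | w ∈ ends e} = ↑(Finset.univ.filter (fun e => w ∈ ends e)) := by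
    ext e; simp
  rw [hsetv, Set.ncard_coe_finset] at hdegv
  rw [hsetw, Set.ncard_coe_finset] at hdegw
  have hdegv' : Odd (degF ends Finset.univ v) := hdegv
  have hdegw' : Odd (degF ends Finset.univ w) := hdegw
  -- extract the bouquet
  obtain ⟨e1, e2, hne12, hset⟩ := Set.ncard_eq_two.mp hbouquet
  have he1 : ends e1 = s(v, w) := by
    have : e1 ∈ {e | ends e = s(v, w)} := by rw [hset]; exact Set.mem_insert _ _
    exact this
  have he2 : ends e2 = s(v, w) := by
    have : e2 ∈ {e | ends e = s(v, w)} := by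
      rw [hset]; exact Set.mem_insert_of_mem _ rfl
    exact this
  have hbq : ∀ e, ends e = s(v, w) → e = e1 ∨ e = e2 := by
    intro e he
    have : e ∈ {e | ends e = s(v, w)} := he
    rw [hset] at this
    simpa using this
  rcases Nat.even_or_odd (Fintype.card V) with hpar | hpar
  · exact evenCase ends hloopless hconn v w e1 e2 he1 he2 hne12 hpar
  · exact oddCase ends hloopless v w hvw hdegv' hdegw' e1 e2 he1 he2 hne12 hbq hconnvw hpar
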